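/- arXiv:2011.03655 — 2 statements merged into one kernel-verified Lean document; each statement's English description precedes it below -/
import Mathlib

section
/- Let Θ ⊆ ℝ^d be compact with positive Lebesgue measure, X a metric space, ν a σ-finite measure on X, and q : Θ × X → ℝ such that (i) for every θ ∈ Θ, q(θ,·) is a probability density with respect to ν, (ii) q is C′-Lipschitz on (Θ × X, ‖·‖ + d_X), and (iii) log q is bounded. For priors π absolutely continuous with respect to Lebesgue measure on Θ with density h_π, the posterior Post(x,π) is absolutely continuous with density proportional to θ ↦ h_π(θ) q(θ,x). Then for every set E of absolutely continuous priors on Θ with sup_{π ∈ E} ‖h_π‖_∞ < ∞, the map (x,π) ↦ Post(x,π) from (X × E, d_X + d_sup) to the absolutely continuous probability measures on Θ with metric d_sup is Lipschitz continuous, where d_sup(μ,ν) = ‖h_μ − h_ν‖_∞. Moreover, if h_π is Lipschitz then the posterior density θ ↦ h_π(θ) q(θ,x) / ∫ h_π q(·,x) dLeb is Lipschitz. -/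
open MeasureTheory

/-- Lebesgue measure on a subset of Euclidean space, viewed as a measure on the subtype. -/
noncomputable def lebOn {d : ℕ} (Θ : Set (EuclideanSpace ℝ (Fin d))) : Measure ↥Θ :=
  (volume : Measure (EuclideanSpace ℝ (Fin d))).comap Subtype.val

/-- The posterior density associated with a prior density `h` and observation `x`:
`θ ↦ h θ * q θ x / ∫ h q(·,x) dLeb`. -/
noncomputable def postDens {d : ℕ} {Θ : Set (EuclideanSpace ℝ (Fin d))} {X : Type*}
    (q : ↥Θ → X → ℝ) (h : ↥Θ → ℝ) (x : X) (θ : ↥Θ) : ℝ :=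
  h θ * q θ x / ∫ t, h t * q t x ∂(lebOn Θ)

/-- sup-norm Lipschitz continuity of the posterior map on a family of
absolutely continuous priors with uniformly essentially bounded densities, for a dominated
model with Lipschitz density and bounded log-density; moreover Lipschitz prior densities give
Lipschitz posterior densities. -/
theorem posterior_density_map_supnorm_lipschitz
    {d : ℕ} {X : Type*} [MetricSpace X] [MeasurableSpace X] [BorelSpace X]
    (Θ : Set (EuclideanSpace ℝ (Fin d))) (hΘc : IsCompact Θ) (hΘvol : 0 < volume Θ)
    (ν : Measure X) [SigmaFinite ν]
    (q : ↥Θ → X → ℝ)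
    -- (i) `q(θ,·)` is a probability density with respect to `ν`
    (hdens : ∀ θ : ↥Θ, ∫⁻ x, ENNReal.ofReal (q θ x) ∂ν = 1)
    -- (ii) `q` is `C'`-Lipschitz for the sum metric on `Θ × X`
    (C' : ℝ) (hC' : 0 ≤ C')
    (hqLip : ∀ θ θ' : ↥Θ, ∀ x x' : X,
      |q θ x - q θ' x'| ≤ C' * (‖(θ : EuclideanSpace ℝ (Fin d)) - θ'‖ + dist x x'))
    -- (iii) `log q` is bounded
    (c₁ c₂ : ℝ) (hc₁ : 0 < c₁)
    (hqbd : ∀ θ x, c₁ ≤ q θ x ∧ q θ x ≤ c₂)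
    -- `H` is a set of probability densities (w.r.t. Lebesgue measure on `Θ`)
    (H : Set (↥Θ → ℝ))
    (hHmeas : ∀ h ∈ H, Measurable h)
    (hHnn : ∀ h ∈ H, ∀ θ, 0 ≤ h θ)
    (hHdens : ∀ h ∈ H, ∫⁻ θ, ENNReal.ofReal (h θ) ∂(lebOn Θ) = 1)
    -- the densities in `H` are uniformly essentially bounded
    (hHbd : ∃ N : ℝ, ∀ h ∈ H, eLpNorm h ⊤ (lebOn Θ) ≤ ENNReal.ofReal N) :
    -- the posterior map is Lipschitz from `(X × H, d_X + d_sup)` to `d_sup`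
    (∃ K : ℝ, 0 ≤ K ∧ ∀ x x' : X, ∀ h ∈ H, ∀ h' ∈ H,
      (eLpNorm (fun θ => postDens q h x θ - postDens q h' x' θ) ⊤ (lebOn Θ)).toReal ≤
        K * (dist x x' + (eLpNorm (fun θ => h θ - h' θ) ⊤ (lebOn Θ)).toReal)) ∧
    -- Lipschitz prior densities give Lipschitz posterior densities
    (∀ h ∈ H, (∃ Kh : NNReal, LipschitzWith Kh h) →
      ∀ x : X, ∃ K' : NNReal, LipschitzWith K' (postDens q h x)) := by
  -- basic setup
  set μ := lebOn Θ with hμdef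
  have hΘm : MeasurableSet Θ := hΘc.isClosed.measurableSet
  have hμuniv : μ Set.univ = volume Θ := by
    rw [hμdef, lebOn, MeasurableEmbedding.comap_apply (MeasurableEmbedding.subtype_coe hΘm)]
    simp
  haveI : IsFiniteMeasure μ := ⟨by rw [hμuniv]; exact hΘc.measure_lt_top⟩
  have hΘne : Θ.Nonempty := by
    rcases Set.eq_empty_or_nonempty Θ with he | hne
    · rw [he] at hΘvol; simp at hΘvol
    · exact hne
  obtain ⟨θ₀, hθ₀⟩ := hΘne
  set θ₀' : ↥Θ := ⟨θ₀, hθ₀⟩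
  -- q(·,x) is Lipschitz hence continuous & measurable
  have hqLipθ : ∀ (x : X) (θ θ' : ↥Θ), |q θ x - q θ' x| ≤ C' * dist θ θ' := by
    intro x θ θ'
    have := hqLip θ θ' x x
    simpa [Subtype.dist_eq, dist_eq_norm] using this
  have hqcont : ∀ x, Continuous (fun θ : ↥Θ => q θ x) := by
    intro x
    refine (LipschitzWith.of_dist_le_mul (K := C'.toNNReal) fun θ θ' => ?_).continuous
    rw [Real.dist_eq]
    calc |q θ x - q θ' x| ≤ C' * dist θ θ' := hqLipθ x θ θ'
    _ ≤ (C'.toNNReal : ℝ) * dist θ θ' := by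
        apply mul_le_mul_of_nonneg_right _ dist_nonneg
        rw [Real.coe_toNNReal _ hC']
  have hqnn : ∀ (θ : ↥Θ) x, 0 ≤ q θ x := fun θ x => le_trans hc₁.le (hqbd θ x).1
  -- integrability of densities
  have hInt : ∀ h ∈ H, Integrable h μ := by
    intro h hH
    refine ⟨(hHmeas h hH).aestronglyMeasurable, ?_⟩
    rw [hasFiniteIntegral_iff_norm]
    have : ∀ t, ENNReal.ofReal ‖h t‖ = ENNReal.ofReal (h t) := fun t => by
      rw [Real.norm_eq_abs, abs_of_nonneg (hHnn h hH t)]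
    rw [lintegral_congr this, hHdens h hH]; exact ENNReal.one_lt_top
  have hIone : ∀ h ∈ H, ∫ t, h t ∂μ = 1 := by
    intro h hH
    rw [integral_eq_lintegral_of_nonneg_ae (ae_of_all _ (hHnn h hH))
      (hHmeas h hH).aestronglyMeasurable, hHdens h hH]
    simp
  have hIntq : ∀ h ∈ H, ∀ x, Integrable (fun t => h t * q t x) μ := by
    intro h hH x
    refine Integrable.mono' ((hInt h hH).const_mul c₂)
      (((hHmeas h hH).mul (hqcont x).measurable).aestronglyMeasurable) (ae_of_all _ fun t => ?_)
    rw [Real.norm_eq_abs, abs_of_nonneg (mul_nonneg (hHnn h hH t) (hqnn t x))]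
    calc h t * q t x ≤ h t * c₂ := mul_le_mul_of_nonneg_left (hqbd t x).2 (hHnn h hH t)
    _ = c₂ * h t := mul_comm _ _
  -- bounds for the normalizing constant
  have hZlb : ∀ h ∈ H, ∀ x, c₁ ≤ ∫ t, h t * q t x ∂μ := by
    intro h hH x
    have : ∫ t, c₁ * h t ∂μ ≤ ∫ t, h t * q t x ∂μ := by
      refine integral_mono ((hInt h hH).const_mul c₁) (hIntq h hH x) fun t => ?_
      rw [mul_comm]
      exact mul_le_mul_of_nonneg_left (hqbd t x).1 (hHnn h hH t)
    rwa [integral_const_mul _ _, hIone h hH, mul_one] at this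
  have hZub : ∀ h ∈ H, ∀ x, ∫ t, h t * q t x ∂μ ≤ c₂ := by
    intro h hH x
    have : ∫ t, h t * q t x ∂μ ≤ ∫ t, c₂ * h t ∂μ := by
      refine integral_mono (hIntq h hH x) ((hInt h hH).const_mul c₂) fun t => ?_
      rw [mul_comm c₂]
      exact mul_le_mul_of_nonneg_left (hqbd t x).2 (hHnn h hH t)
    rwa [integral_const_mul _ _, hIone h hH, mul_one] at this
  have hZpos : ∀ h ∈ H, ∀ x, 0 < ∫ t, h t * q t x ∂μ := fun h hH x => lt_of_lt_of_le hc₁ (hZlb h hH x)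
  have hc₂ : c₁ ≤ c₂ := by
    by_cases hX : Nonempty X
    · obtain ⟨x⟩ := hX; exact le_trans (hqbd θ₀' x).1 (hqbd θ₀' x).2
    · exfalso
      haveI := not_nonempty_iff.mp hX
      have h1 := hdens θ₀'
      rw [ν.eq_zero_of_isEmpty] at h1
      simp at h1
  have hc₂0 : 0 ≤ c₂ := le_trans hc₁.le hc₂
  obtain ⟨N, hN⟩ := hHbd
  set N₀ := max N 0 with hN₀def
  have hN₀ : 0 ≤ N₀ := le_max_right _ _
  set V := (μ Set.univ).toReal with hVdef
  have hV : 0 ≤ V := ENNReal.toReal_nonneg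
  have haeN : ∀ h ∈ H, ∀ᵐ θ ∂μ, h θ ≤ N₀ := by
    intro h hH
    filter_upwards [ae_le_eLpNormEssSup (f := h) (μ := μ)] with θ hθ
    have h1 : ENNReal.ofReal ‖h θ‖ ≤ ENNReal.ofReal N₀ := by
      rw [ofReal_norm]
      calc (‖h θ‖₊ : ENNReal) ≤ eLpNormEssSup h μ := hθ
      _ ≤ ENNReal.ofReal N := by rw [← eLpNorm_exponent_top]; exact hN h hH
      _ ≤ ENNReal.ofReal N₀ := ENNReal.ofReal_le_ofReal (le_max_left _ _)
    have := (ENNReal.ofReal_le_ofReal_iff hN₀).mp h1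
    calc h θ ≤ |h θ| := le_abs_self _
    _ ≤ N₀ := by rwa [Real.norm_eq_abs] at this
  have hK : 0 ≤ c₂ / c₁ + N₀ * c₂ * c₂ * V / (c₁ * c₁) + N₀ * C' / c₁ + N₀ * c₂ * C' / (c₁ * c₁) := by
    have h1 : (0:ℝ) ≤ c₂ / c₁ := div_nonneg hc₂0 hc₁.le
    have h2 : (0:ℝ) ≤ N₀ * c₂ * c₂ * V / (c₁ * c₁) :=
      div_nonneg (mul_nonneg (mul_nonneg (mul_nonneg hN₀ hc₂0) hc₂0) hV)
        (mul_nonneg hc₁.le hc₁.le)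
    have h3 : (0:ℝ) ≤ N₀ * C' / c₁ := div_nonneg (mul_nonneg hN₀ hC') hc₁.le
    have h4 : (0:ℝ) ≤ N₀ * c₂ * C' / (c₁ * c₁) :=
      div_nonneg (mul_nonneg (mul_nonneg hN₀ hc₂0) hC') (mul_nonneg hc₁.le hc₁.le)
    linarith
  constructor
  · -- Part 1
    refine ⟨c₂ / c₁ + N₀ * c₂ * c₂ * V / (c₁ * c₁) + N₀ * C' / c₁ + N₀ * c₂ * C' / (c₁ * c₁),
      hK, ?_⟩
    intro x x' h hH h' hH'
    set dx := dist x x' with hdxdef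
    have hdx : 0 ≤ dx := dist_nonneg
    set Δ := (eLpNorm (fun θ => h θ - h' θ) ⊤ μ).toReal with hΔdef
    have hΔ : 0 ≤ Δ := ENNReal.toReal_nonneg
    -- finiteness of the sup-norm of the difference
    have hΔfin : eLpNorm (fun θ => h θ - h' θ) ⊤ μ < ⊤ := by
      rw [eLpNorm_exponent_top]
      refine lt_of_le_of_lt (eLpNormEssSup_le_of_ae_bound (C := N₀ + N₀) ?_) ENNReal.ofReal_lt_top
      filter_upwards [haeN h hH, haeN h' hH'] with θ h1 h2
      have h3 := hHnn h hH θ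
      have h4 := hHnn h' hH' θ
      rw [Real.norm_eq_abs]
      rw [abs_le]
      constructor <;> linarith
    have haeΔ : ∀ᵐ θ ∂μ, |h θ - h' θ| ≤ Δ := by
      filter_upwards [ae_le_eLpNormEssSup (f := fun θ => h θ - h' θ) (μ := μ)] with θ hθ
      have : (‖h θ - h' θ‖₊ : ENNReal) ≤ eLpNorm (fun θ => h θ - h' θ) ⊤ μ := by
        rw [eLpNorm_exponent_top]; exact hθ
      have h2 := ENNReal.toReal_mono hΔfin.ne this
      simpa [hΔdef] using h2
    set Z := ∫ t, h t * q t x ∂μ with hZdef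
    set Z' := ∫ t, h' t * q t x' ∂μ with hZ'def
    have hZ1 : c₁ ≤ Z := hZlb h hH x
    have hZ2 : c₁ ≤ Z' := hZlb h' hH' x'
    have hZu : Z ≤ c₂ := hZub h hH x
    have hZu' : Z' ≤ c₂ := hZub h' hH' x'
    -- bound on |Z - Z'|
    have hptbd : ∀ t : ↥Θ, |h t * q t x - h' t * q t x'| ≤ c₂ * |h t - h' t| + C' * dx * h' t := by
      intro t
      have hq' : |q t x - q t x'| ≤ C' * dx := by
        have := hqLip t t x x'
        simpa using this
      have hiden : h t * q t x - h' t * q t x' =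
          (h t - h' t) * q t x + h' t * (q t x - q t x') := by ring
      rw [hiden]
      calc |(h t - h' t) * q t x + h' t * (q t x - q t x')|
          ≤ |(h t - h' t) * q t x| + |h' t * (q t x - q t x')| := abs_add_le _ _
      _ = |h t - h' t| * q t x + h' t * |q t x - q t x'| := by
          rw [abs_mul, abs_mul, abs_of_nonneg (hqnn t x), abs_of_nonneg (hHnn h' hH' t)]
      _ ≤ |h t - h' t| * c₂ + h' t * (C' * dx) := by
          refine add_le_add (mul_le_mul_of_nonneg_left (hqbd t x).2 (abs_nonneg _))
            (mul_le_mul_of_nonneg_left hq' (hHnn h' hH' t))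
      _ = c₂ * |h t - h' t| + C' * dx * h' t := by ring
    have habsint : Integrable (fun t => |h t - h' t|) μ := ((hInt h hH).sub (hInt h' hH')).abs
    have hZdiff : |Z - Z'| ≤ c₂ * Δ * V + C' * dx := by
      have hsub : Z - Z' = ∫ t, (h t * q t x - h' t * q t x') ∂μ :=
        (integral_sub (hIntq h hH x) (hIntq h' hH' x')).symm
      have hintabs : Integrable (fun t => |h t * q t x - h' t * q t x'|) μ :=
        ((hIntq h hH x).sub (hIntq h' hH' x')).abs
      have hintrhs : Integrable (fun t => c₂ * |h t - h' t| + C' * dx * h' t) μ :=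
        (habsint.const_mul c₂).add ((hInt h' hH').const_mul (C' * dx))
      calc |Z - Z'| = |∫ t, (h t * q t x - h' t * q t x') ∂μ| := by rw [hsub]
      _ ≤ ∫ t, |h t * q t x - h' t * q t x'| ∂μ := by
          simpa [Real.norm_eq_abs] using
            norm_integral_le_integral_norm (fun t => h t * q t x - h' t * q t x') (μ := μ)
      _ ≤ ∫ t, (c₂ * |h t - h' t| + C' * dx * h' t) ∂μ :=
          integral_mono hintabs hintrhs hptbd
      _ = c₂ * ∫ t, |h t - h' t| ∂μ + C' * dx * ∫ t, h' t ∂μ := by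
          rw [integral_add (habsint.const_mul c₂) ((hInt h' hH').const_mul (C' * dx)),
            integral_const_mul _ _, integral_const_mul _ _]
      _ ≤ c₂ * (Δ * V) + C' * dx * 1 := by
          refine add_le_add (mul_le_mul_of_nonneg_left ?_ hc₂0) (by rw [hIone h' hH'])
          calc ∫ t, |h t - h' t| ∂μ ≤ ∫ _t, Δ ∂μ := integral_mono_ae habsint (integrable_const Δ) haeΔ
          _ = Δ * V := by rw [integral_const, smul_eq_mul, hVdef, measureReal_def]; ring
      _ = c₂ * Δ * V + C' * dx := by ring
    -- pointwise a.e. bound on the difference of posterior densities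
    have hptwise : ∀ᵐ θ ∂μ, ‖postDens q h x θ - postDens q h' x' θ‖ ≤
        (c₂ * Δ + N₀ * C' * dx) / c₁ + N₀ * c₂ * (c₂ * Δ * V + C' * dx) / (c₁ * c₁) := by
      filter_upwards [haeΔ, haeN h' hH'] with θ hθΔ hθN
      have hZ0 : Z ≠ 0 := (lt_of_lt_of_le hc₁ hZ1).ne'
      have hZ'0 : Z' ≠ 0 := (lt_of_lt_of_le hc₁ hZ2).ne'
      have hq' : |q θ x - q θ x'| ≤ C' * dx := by simpa using hqLip θ θ x x'
      have hab : |h θ * q θ x - h' θ * q θ x'| ≤ c₂ * Δ + N₀ * C' * dx := by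
        have hiden : h θ * q θ x - h' θ * q θ x' =
            (h θ - h' θ) * q θ x + h' θ * (q θ x - q θ x') := by ring
        rw [hiden]
        calc |(h θ - h' θ) * q θ x + h' θ * (q θ x - q θ x')|
            ≤ |(h θ - h' θ) * q θ x| + |h' θ * (q θ x - q θ x')| := abs_add_le _ _
        _ = |h θ - h' θ| * q θ x + h' θ * |q θ x - q θ x'| := by
            rw [abs_mul, abs_mul, abs_of_nonneg (hqnn θ x), abs_of_nonneg (hHnn h' hH' θ)]
        _ ≤ Δ * c₂ + N₀ * (C' * dx) := by
            refine add_le_add (mul_le_mul hθΔ (hqbd θ x).2 (hqnn θ x) hΔ)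
              (mul_le_mul hθN hq' (abs_nonneg _) hN₀)
        _ = c₂ * Δ + N₀ * C' * dx := by ring
      have hb : h' θ * q θ x' ≤ N₀ * c₂ :=
        mul_le_mul hθN (hqbd θ x').2 (hqnn θ x') hN₀
      have hbnn : 0 ≤ h' θ * q θ x' := mul_nonneg (hHnn h' hH' θ) (hqnn θ x')
      have hrw : postDens q h x θ - postDens q h' x' θ =
          (h θ * q θ x - h' θ * q θ x') / Z +
            (h' θ * q θ x') * (Z' - Z) / (Z * Z') := by
        rw [postDens, postDens, ← hZdef, ← hZ'def]
        field_simp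
        ring
      rw [Real.norm_eq_abs, hrw]
      calc |(h θ * q θ x - h' θ * q θ x') / Z + (h' θ * q θ x') * (Z' - Z) / (Z * Z')|
          ≤ |(h θ * q θ x - h' θ * q θ x') / Z| + |(h' θ * q θ x') * (Z' - Z) / (Z * Z')| :=
            abs_add_le _ _
      _ = |h θ * q θ x - h' θ * q θ x'| / Z + (h' θ * q θ x') * |Z - Z'| / (Z * Z') := by
          rw [abs_div, abs_div, abs_of_pos (lt_of_lt_of_le hc₁ hZ1),
            abs_of_pos (mul_pos (lt_of_lt_of_le hc₁ hZ1) (lt_of_lt_of_le hc₁ hZ2)),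
            abs_mul, abs_of_nonneg hbnn, abs_sub_comm Z' Z]
      _ ≤ (c₂ * Δ + N₀ * C' * dx) / c₁ + N₀ * c₂ * (c₂ * Δ * V + C' * dx) / (c₁ * c₁) := by
          refine add_le_add (div_le_div₀ (by positivity) hab hc₁ hZ1)
            (div_le_div₀ (by positivity) ?_ (by positivity)
              (mul_le_mul hZ1 hZ2 hc₁.le (le_trans hc₁.le hZ1)))
          exact mul_le_mul hb hZdiff (abs_nonneg _) (by positivity)
    have hkey : (c₂ * Δ + N₀ * C' * dx) / c₁ + N₀ * c₂ * (c₂ * Δ * V + C' * dx) / (c₁ * c₁) ≤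
        (c₂ / c₁ + N₀ * c₂ * c₂ * V / (c₁ * c₁) + N₀ * C' / c₁ + N₀ * c₂ * C' / (c₁ * c₁)) *
        (dx + Δ) := by
      have hexp : (c₂ * Δ + N₀ * C' * dx) / c₁ + N₀ * c₂ * (c₂ * Δ * V + C' * dx) / (c₁ * c₁) =
          (c₂ / c₁) * Δ + (N₀ * C' / c₁) * dx + (N₀ * c₂ * c₂ * V / (c₁ * c₁)) * Δ +
            (N₀ * c₂ * C' / (c₁ * c₁)) * dx := by
        field_simp
        ring
      rw [hexp]
      have hA : (0:ℝ) ≤ c₂ / c₁ := div_nonneg hc₂0 hc₁.le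
      have hB : (0:ℝ) ≤ N₀ * C' / c₁ := div_nonneg (mul_nonneg hN₀ hC') hc₁.le
      have hCc : (0:ℝ) ≤ N₀ * c₂ * c₂ * V / (c₁ * c₁) :=
        div_nonneg (mul_nonneg (mul_nonneg (mul_nonneg hN₀ hc₂0) hc₂0) hV)
          (mul_nonneg hc₁.le hc₁.le)
      have hD : (0:ℝ) ≤ N₀ * c₂ * C' / (c₁ * c₁) :=
        div_nonneg (mul_nonneg (mul_nonneg hN₀ hc₂0) hC') (mul_nonneg hc₁.le hc₁.le)
      nlinarith [mul_nonneg hA hdx, mul_nonneg hB hΔ, mul_nonneg hCc hdx, mul_nonneg hD hΔ]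
    have hbnd : eLpNorm (fun θ => postDens q h x θ - postDens q h' x' θ) ⊤ μ ≤
        ENNReal.ofReal ((c₂ / c₁ + N₀ * c₂ * c₂ * V / (c₁ * c₁) + N₀ * C' / c₁ +
          N₀ * c₂ * C' / (c₁ * c₁)) * (dx + Δ)) := by
      rw [eLpNorm_exponent_top]
      refine eLpNormEssSup_le_of_ae_bound ?_
      filter_upwards [hptwise] with θ hθ
      exact le_trans hθ hkey
    refine ENNReal.toReal_le_of_le_ofReal ?_ hbnd
    exact mul_nonneg hK (add_nonneg hdx hΔ)
  · -- Part 2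
    rintro h hH ⟨Kh, hKh⟩ x
    haveI : CompactSpace ↥Θ := isCompact_iff_compactSpace.mp hΘc
    obtain ⟨M, hM⟩ := (isCompact_univ (X := ↥Θ)).exists_bound_of_continuousOn
      hKh.continuous.continuousOn
    have hM0 : 0 ≤ M := le_trans (norm_nonneg (h θ₀')) (hM θ₀' trivial)
    have hMabs : ∀ θ : ↥Θ, |h θ| ≤ M := fun θ => by
      have := hM θ trivial; rwa [Real.norm_eq_abs] at this
    have hZ1 : c₁ ≤ ∫ t, h t * q t x ∂μ := hZlb h hH x
    have hZp : 0 < ∫ t, h t * q t x ∂μ := lt_of_lt_of_le hc₁ hZ1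
    set B := (M * C' + c₂ * (Kh : ℝ)) / c₁ with hBdef
    refine ⟨B.toNNReal, LipschitzWith.of_dist_le_mul fun θ θ' => ?_⟩
    have hhd : |h θ - h θ'| ≤ (Kh : ℝ) * dist θ θ' := by
      have := hKh.dist_le_mul θ θ'
      rwa [Real.dist_eq] at this
    have hqd : |q θ x - q θ' x| ≤ C' * dist θ θ' := hqLipθ x θ θ'
    have hnum : |h θ * q θ x - h θ' * q θ' x| ≤ (M * C' + c₂ * (Kh : ℝ)) * dist θ θ' := by
      have hiden : h θ * q θ x - h θ' * q θ' x =
          h θ * (q θ x - q θ' x) + q θ' x * (h θ - h θ') := by ring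
      rw [hiden]
      calc |h θ * (q θ x - q θ' x) + q θ' x * (h θ - h θ')|
          ≤ |h θ * (q θ x - q θ' x)| + |q θ' x * (h θ - h θ')| := abs_add_le _ _
      _ = |h θ| * |q θ x - q θ' x| + q θ' x * |h θ - h θ'| := by
          rw [abs_mul, abs_mul, abs_of_nonneg (hqnn θ' x)]
      _ ≤ M * (C' * dist θ θ') + c₂ * ((Kh : ℝ) * dist θ θ') := by
          refine add_le_add (mul_le_mul (hMabs θ) hqd (abs_nonneg _) hM0)
            (mul_le_mul (hqbd θ' x).2 hhd (abs_nonneg _) hc₂0)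
      _ = (M * C' + c₂ * (Kh : ℝ)) * dist θ θ' := by ring
    rw [Real.dist_eq]
    have hcalc : |postDens q h x θ - postDens q h x θ'| =
        |h θ * q θ x - h θ' * q θ' x| / (∫ t, h t * q t x ∂μ) := by
      rw [postDens, postDens, div_sub_div_same, abs_div, abs_of_pos hZp]
    rw [hcalc]
    calc |h θ * q θ x - h θ' * q θ' x| / (∫ t, h t * q t x ∂μ)
        ≤ ((M * C' + c₂ * (Kh : ℝ)) * dist θ θ') / c₁ :=
          div_le_div₀ (by positivity) hnum hc₁ hZ1
    _ = B * dist θ θ' := by rw [hBdef]; ring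
    _ ≤ (B.toNNReal : ℝ) * dist θ θ' := by
        refine mul_le_mul_of_nonneg_right ?_ dist_nonneg
        rw [Real.coe_toNNReal']
        exact le_max_left _ _
end

section
/- Consider the Bernoulli model: Θ = [0,1], X = {0,1} with a metric d_X, and q(θ,x) = θ^x (1−θ)^{1−x}. For π ∈ P([0,1]) with ∫ q(θ,x) π(dθ) > 0 define the posterior Post(x,π)(B) = (∫_B q(θ,x) π(dθ)) / (∫_{[0,1]} q(θ,x) π(dθ)). Fix a, b > 0 and let AGD(a,b) = { π ∈ P([0,1]) : π([0,a] ∪ [1−a,1]) ≤ 1−b }. Then the map (x,π) ↦ Post(x,π) from (X × AGD(a,b), d_X + W1) to (P([0,1]), W1) is Lipschitz. -/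
open MeasureTheory

/-- The Wasserstein-1 distance between two measures, via Kantorovich–Rubinstein duality. -/
noncomputable def W1 {T : Type*} [MeasurableSpace T] [PseudoMetricSpace T]
    (μ ν : Measure T) : ℝ :=
  sSup { r : ℝ | ∃ f : T → ℝ, LipschitzWith 1 f ∧
    r = |(∫ t, f t ∂μ) - ∫ t, f t ∂ν| }

/-- The Bernoulli parameter space `[0,1]`. -/
abbrev BernΘ : Set ℝ := Set.Icc (0:ℝ) 1

/-- The Bernoulli conditional density `q(θ,x) = θ^x (1−θ)^{1−x}` on `{0,1}` (encoded as
`Bool`). -/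
noncomputable def bq (θ : ↥BernΘ) (x : Bool) : ℝ := if x then (θ : ℝ) else 1 - (θ : ℝ)

/-- The Bernoulli posterior of prior `π` given observation `x`. -/
noncomputable def bPost (π : ProbabilityMeasure ↥BernΘ) (x : Bool) : Measure ↥BernΘ :=
  (∫⁻ θ, ENNReal.ofReal (bq θ x) ∂(π : Measure ↥BernΘ))⁻¹ •
    (π : Measure ↥BernΘ).withDensity fun θ => ENNReal.ofReal (bq θ x)

/-- `AGD a b`: the set of priors on `[0,1]` putting mass at most `1 − b` on
`[0,a] ∪ [1−a,1]`. -/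
def AGD (a b : ℝ) : Set (ProbabilityMeasure ↥BernΘ) :=
  {π | ((π : Measure ↥BernΘ)
      {θ : ↥BernΘ | (θ : ℝ) ≤ a ∨ 1 - a ≤ (θ : ℝ)}).toReal ≤ 1 - b}

namespace BernAux

noncomputable def θ0 : ↥BernΘ := ⟨0, by constructor <;> norm_num⟩

lemma bq_nonneg (θ : ↥BernΘ) (x : Bool) : 0 ≤ bq θ x := by
  cases x <;> simp [bq]
  · linarith [θ.2.2]
  · exact θ.2.1

lemma bq_le_one (θ : ↥BernΘ) (x : Bool) : bq θ x ≤ 1 := by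
  cases x <;> simp [bq]
  · linarith [θ.2.1]
  · exact θ.2.2

lemma bq_abs_le_one (θ : ↥BernΘ) (x : Bool) : |bq θ x| ≤ 1 :=
  abs_le.2 ⟨by linarith [bq_nonneg θ x], bq_le_one θ x⟩

lemma dist_eq' (θ θ' : ↥BernΘ) : dist θ θ' = |(θ : ℝ) - (θ' : ℝ)| := by
  rw [Subtype.dist_eq, Real.dist_eq]

lemma dist_le_one (θ θ' : ↥BernΘ) : dist θ θ' ≤ 1 := by
  rw [dist_eq']
  rw [abs_le]
  constructor <;> [linarith [θ.2.1, θ'.2.2]; linarith [θ.2.2, θ'.2.1]]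

lemma bq_lip (x : Bool) (θ θ' : ↥BernΘ) : |bq θ x - bq θ' x| ≤ dist θ θ' := by
  rw [dist_eq']
  cases x <;> simp [bq]
  · exact (abs_sub_comm _ _).le

lemma bq_continuous (x : Bool) : Continuous (fun θ : ↥BernΘ => bq θ x) := by
  cases x <;> simp only [bq, if_true, if_false, Bool.false_eq_true]
  · exact continuous_const.sub continuous_subtype_val
  · exact continuous_subtype_val

lemma lip1_abs {f : ↥BernΘ → ℝ} (hf : LipschitzWith 1 f) (t t' : ↥BernΘ) :
    |f t - f t'| ≤ dist t t' := by
  have h := hf.dist_le_mul t t'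
  rw [Real.dist_eq] at h
  simpa using h

lemma integrable_cont {f : ↥BernΘ → ℝ} (hf : Continuous f) (μ : Measure ↥BernΘ)
    [IsFiniteMeasure μ] : Integrable f μ :=
  hf.integrable_of_hasCompactSupport (HasCompactSupport.of_compactSpace f)

lemma abs_integral_le_of_bound (μ : Measure ↥BernΘ) [IsProbabilityMeasure μ]
    {f : ↥BernΘ → ℝ} {C : ℝ} (h : ∀ t, |f t| ≤ C) : |∫ t, f t ∂μ| ≤ C := by
  have := norm_integral_le_of_norm_le_const (μ := μ) (f := f) (C := C)
    (Filter.Eventually.of_forall (fun t => by simpa [Real.norm_eq_abs] using h t))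
  simpa [Real.norm_eq_abs, measure_univ] using this

lemma el_le_two (μ ν : Measure ↥BernΘ) [IsProbabilityMeasure μ] [IsProbabilityMeasure ν] :
    ∀ r ∈ { r : ℝ | ∃ f : ↥BernΘ → ℝ, LipschitzWith 1 f ∧
      r = |(∫ t, f t ∂μ) - ∫ t, f t ∂ν| }, r ≤ 2 := by
  rintro r ⟨f, hf, rfl⟩
  have hb : ∀ t : ↥BernΘ, |f t - f θ0| ≤ 1 :=
    fun t => le_trans (lip1_abs hf t θ0) (dist_le_one t θ0)
  have key : ∀ (κ : Measure ↥BernΘ) (_ : IsProbabilityMeasure κ),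
      ∫ t, f t ∂κ = (∫ t, (f t - f θ0) ∂κ) + f θ0 := by
    intro κ hκ
    have hint : Integrable f κ := integrable_cont hf.continuous κ
    rw [integral_sub hint (integrable_const _), integral_const]
    simp [measure_univ]
  rw [key μ ‹_›, key ν ‹_›]
  have h1 : |∫ t, (f t - f θ0) ∂μ| ≤ 1 := abs_integral_le_of_bound μ hb
  have h2 : |∫ t, (f t - f θ0) ∂ν| ≤ 1 := abs_integral_le_of_bound ν hb
  calc |(∫ t, (f t - f θ0) ∂μ) + f θ0 - ((∫ t, (f t - f θ0) ∂ν) + f θ0)|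
      = |(∫ t, (f t - f θ0) ∂μ) - (∫ t, (f t - f θ0) ∂ν)| := by congr 1; ring
    _ ≤ |∫ t, (f t - f θ0) ∂μ| + |∫ t, (f t - f θ0) ∂ν| := abs_sub _ _
    _ ≤ 2 := by linarith

lemma W1_bddAbove (μ ν : Measure ↥BernΘ) [IsProbabilityMeasure μ] [IsProbabilityMeasure ν] :
    BddAbove { r : ℝ | ∃ f : ↥BernΘ → ℝ, LipschitzWith 1 f ∧
      r = |(∫ t, f t ∂μ) - ∫ t, f t ∂ν| } :=
  ⟨2, fun r hr => el_le_two μ ν r hr⟩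

lemma W1_le_two (μ ν : Measure ↥BernΘ) [IsProbabilityMeasure μ] [IsProbabilityMeasure ν] :
    W1 μ ν ≤ 2 :=
  Real.sSup_le (el_le_two μ ν) (by norm_num)

lemma W1_nonneg (μ ν : Measure ↥BernΘ) [IsProbabilityMeasure μ] [IsProbabilityMeasure ν] :
    0 ≤ W1 μ ν :=
  le_csSup (W1_bddAbove μ ν) ⟨fun _ => 0, LipschitzWith.const' 0, by simp⟩

/-- Kantorovich–Rubinstein-type upper bound: Lipschitz test functions see `W1`. -/
lemma abs_integral_sub_le (μ ν : Measure ↥BernΘ) [IsProbabilityMeasure μ]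
    [IsProbabilityMeasure ν] {g : ↥BernΘ → ℝ} {L : ℝ} (hL : 0 ≤ L)
    (hg : ∀ θ θ', |g θ - g θ'| ≤ L * dist θ θ') :
    |(∫ t, g t ∂μ) - ∫ t, g t ∂ν| ≤ L * W1 μ ν := by
  rcases eq_or_lt_of_le hL with hL0 | hL0
  · obtain rfl : L = 0 := hL0.symm
    have hconst : ∀ t, g t = g θ0 := by
      intro t
      have h1 := hg t θ0
      rw [zero_mul] at h1
      have h2 : g t - g θ0 = 0 := abs_nonpos_iff.mp h1
      linarith
    have hge : g = fun _ => g θ0 := funext hconst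
    rw [hge]
    simp [integral_const, measure_univ]
  · set h : ↥BernΘ → ℝ := fun t => L⁻¹ * g t with hh_def
    have hh : LipschitzWith 1 h := by
      apply LipschitzWith.of_dist_le_mul
      intro t t'
      rw [Real.dist_eq, NNReal.coe_one, one_mul]
      calc |h t - h t'| = |L⁻¹| * |g t - g t'| := by rw [hh_def]; show |L⁻¹ * g t - L⁻¹ * g t'| = _; rw [← abs_mul, mul_sub]
        _ = L⁻¹ * |g t - g t'| := by rw [abs_of_pos (inv_pos.mpr hL0)]
        _ ≤ L⁻¹ * (L * dist t t') := by
            exact mul_le_mul_of_nonneg_left (hg t t') (le_of_lt (inv_pos.mpr hL0))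
        _ = dist t t' := by field_simp
    have hmem : |(∫ t, h t ∂μ) - ∫ t, h t ∂ν| ≤ W1 μ ν :=
      le_csSup (W1_bddAbove μ ν) ⟨h, hh, rfl⟩
    have hint : ∀ κ : Measure ↥BernΘ, ∫ t, h t ∂κ = L⁻¹ * ∫ t, g t ∂κ := by
      intro κ; rw [hh_def]; exact integral_const_mul _ _
    rw [hint, hint] at hmem
    have : |(∫ t, g t ∂μ) - ∫ t, g t ∂ν| = L * |L⁻¹ * (∫ t, g t ∂μ) - L⁻¹ * (∫ t, g t ∂ν)| := by
      rw [← mul_sub, abs_mul, abs_of_pos (inv_pos.mpr hL0)]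
      field_simp
    rw [this]
    exact mul_le_mul_of_nonneg_left hmem hL

/-- Normalizing constant. -/
noncomputable def Z (π : ProbabilityMeasure ↥BernΘ) (x : Bool) : ℝ :=
  ∫ θ, bq θ x ∂(π : Measure ↥BernΘ)

lemma lint_eq (π : ProbabilityMeasure ↥BernΘ) (x : Bool) :
    ∫⁻ θ, ENNReal.ofReal (bq θ x) ∂(π : Measure ↥BernΘ) = ENNReal.ofReal (Z π x) :=
  (ofReal_integral_eq_lintegral_ofReal
    (integrable_cont (bq_continuous x) _)
    (Filter.Eventually.of_forall (fun θ => bq_nonneg θ x))).symm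

lemma Z_le_one (π : ProbabilityMeasure ↥BernΘ) (x : Bool) : Z π x ≤ 1 := by
  have := abs_integral_le_of_bound (π : Measure ↥BernΘ) (fun t => bq_abs_le_one t x)
  calc Z π x ≤ |Z π x| := le_abs_self _
    _ ≤ 1 := this

lemma Z_lb {a b : ℝ} (ha : 0 < a) (hb : 0 < b) {π : ProbabilityMeasure ↥BernΘ}
    (hπ : π ∈ AGD a b) (x : Bool) : a * b ≤ Z π x := by
  set μ := (π : Measure ↥BernΘ)
  set Bad : Set ↥BernΘ := {θ : ↥BernΘ | (θ : ℝ) ≤ a ∨ 1 - a ≤ (θ : ℝ)} with hBad_def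
  have hBadm : MeasurableSet Bad := by
    have h1 : MeasurableSet {θ : ↥BernΘ | (θ : ℝ) ≤ a} :=
      continuous_subtype_val.measurable measurableSet_Iic
    have h2 : MeasurableSet {θ : ↥BernΘ | 1 - a ≤ (θ : ℝ)} :=
      continuous_subtype_val.measurable measurableSet_Ici
    exact h1.union h2
  have hGm : MeasurableSet Badᶜ := hBadm.compl
  have hμBad : μ Bad ≤ 1 := le_trans (measure_mono (Set.subset_univ _)) (le_of_eq measure_univ)
  have hcompl : μ Badᶜ = 1 - μ Bad := by
    rw [measure_compl hBadm (ne_top_of_le_ne_top ENNReal.one_ne_top hμBad), measure_univ]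
  have hG : (b : ℝ) ≤ (μ Badᶜ).toReal := by
    have : (μ Badᶜ).toReal = 1 - (μ Bad).toReal := by
      rw [hcompl, ENNReal.toReal_sub_of_le hμBad ENNReal.one_ne_top]
      simp
    rw [this]
    have := hπ
    simp only [AGD, Set.mem_setOf_eq] at this
    linarith
  -- pointwise: a * indicator of Badᶜ ≤ bq
  have hpt : ∀ θ : ↥BernΘ, Badᶜ.indicator (fun _ => a) θ ≤ bq θ x := by
    intro θ
    by_cases hθ : θ ∈ Badᶜ
    · rw [Set.indicator_of_mem hθ]
      have hθ' : ¬((θ : ℝ) ≤ a ∨ 1 - a ≤ (θ : ℝ)) := hθ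
      push_neg at hθ'
      cases x <;> simp [bq]
      · linarith [hθ'.2]
      · linarith [hθ'.1]
    · rw [Set.indicator_of_notMem hθ]
      exact bq_nonneg θ x
  have hint1 : Integrable (Badᶜ.indicator (fun _ : ↥BernΘ => a)) μ :=
    (integrable_const a).indicator hGm
  have hint2 : Integrable (fun θ => bq θ x) μ := integrable_cont (bq_continuous x) μ
  have := integral_mono hint1 hint2 hpt
  rw [integral_indicator_const _ hGm] at this
  simp only [smul_eq_mul] at this
  calc a * b ≤ (μ Badᶜ).toReal * a := by
        rw [mul_comm]
        exact mul_le_mul_of_nonneg_right hG (le_of_lt ha)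
    _ ≤ Z π x := this

lemma bPost_prob (π : ProbabilityMeasure ↥BernΘ) (x : Bool) (hZ : 0 < Z π x) :
    IsProbabilityMeasure (bPost π x) := by
  constructor
  rw [bPost, lint_eq]
  rw [Measure.smul_apply, withDensity_apply _ MeasurableSet.univ, smul_eq_mul,
    setLIntegral_univ, lint_eq]
  exact ENNReal.inv_mul_cancel (ENNReal.ofReal_pos.mpr hZ).ne' ENNReal.ofReal_ne_top

lemma integral_bPost (π : ProbabilityMeasure ↥BernΘ) (x : Bool) (hZ : 0 < Z π x)
    (f : ↥BernΘ → ℝ) :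
    ∫ θ, f θ ∂(bPost π x) = (∫ θ, f θ * bq θ x ∂(π : Measure ↥BernΘ)) / Z π x := by
  rw [bPost, lint_eq, integral_smul_measure]
  have hmeas : Measurable (fun θ : ↥BernΘ => (bq θ x).toNNReal) :=
    measurable_real_toNNReal.comp (bq_continuous x).measurable
  have hwd : (π : Measure ↥BernΘ).withDensity (fun θ => ENNReal.ofReal (bq θ x))
      = (π : Measure ↥BernΘ).withDensity (fun θ => ((bq θ x).toNNReal : ENNReal)) := rfl
  rw [hwd, integral_withDensity_eq_integral_smul hmeas f]
  have hsm : (fun θ : ↥BernΘ => (bq θ x).toNNReal • f θ) = fun θ => f θ * bq θ x := by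
    funext θ
    rw [NNReal.smul_def, smul_eq_mul, Real.coe_toNNReal _ (bq_nonneg θ x), mul_comm]
  rw [hsm]
  rw [ENNReal.toReal_inv, ENNReal.toReal_ofReal (le_of_lt hZ)]
  rw [smul_eq_mul, div_eq_inv_mul]

/-- Main estimate in the case of equal observations. -/
lemma post_diff_bound {a b : ℝ} (ha : 0 < a) (hb : 0 < b) (x : Bool)
    {π π' : ProbabilityMeasure ↥BernΘ} (hπ : π ∈ AGD a b) (hπ' : π' ∈ AGD a b) :
    W1 (bPost π x) (bPost π' x) ≤
      (3 / (a * b) ^ 2) * W1 (π : Measure ↥BernΘ) (π' : Measure ↥BernΘ) := by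
  set c : ℝ := a * b with hc_def
  have hc : 0 < c := mul_pos ha hb
  set W : ℝ := W1 (π : Measure ↥BernΘ) (π' : Measure ↥BernΘ) with hW_def
  have hW : 0 ≤ W := W1_nonneg _ _
  have hZc : c ≤ Z π x := Z_lb ha hb hπ x
  have hZc' : c ≤ Z π' x := Z_lb ha hb hπ' x
  have hZ : 0 < Z π x := lt_of_lt_of_le hc hZc
  have hZ' : 0 < Z π' x := lt_of_lt_of_le hc hZc'
  have hZ1 : Z π x ≤ 1 := Z_le_one π x
  have hZ1' : Z π' x ≤ 1 := Z_le_one π' x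
  apply Real.sSup_le _ (by positivity)
  rintro r ⟨f, hf, rfl⟩
  set g : ↥BernΘ → ℝ := fun t => f t - f θ0 with hg_def
  have hgb : ∀ t, |g t| ≤ 1 :=
    fun t => le_trans (lip1_abs hf t θ0) (dist_le_one t θ0)
  have hgL : ∀ t t', |g t - g t'| ≤ dist t t' := by
    intro t t'
    have h1 : g t - g t' = f t - f t' := sub_sub_sub_cancel_right _ _ _
    rw [h1]
    exact lip1_abs hf t t'
  -- integrals of f against posteriors in terms of g
  set N : ℝ := ∫ θ, g θ * bq θ x ∂(π : Measure ↥BernΘ) with hN_def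
  set N' : ℝ := ∫ θ, g θ * bq θ x ∂(π' : Measure ↥BernΘ) with hN'_def
  have hsplit : ∀ (κ : ProbabilityMeasure ↥BernΘ),
      (∫ θ, f θ * bq θ x ∂(κ : Measure ↥BernΘ))
        = (∫ θ, g θ * bq θ x ∂(κ : Measure ↥BernΘ)) + f θ0 * Z κ x := by
    intro κ
    have hfi : Integrable (fun θ => g θ * bq θ x) (κ : Measure ↥BernΘ) :=
      integrable_cont (((hf.continuous).sub continuous_const).mul (bq_continuous x)) _
    have hqi : Integrable (fun θ => f θ0 * bq θ x) (κ : Measure ↥BernΘ) :=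
      (integrable_cont (bq_continuous x) _).const_mul _
    have : (fun θ : ↥BernΘ => f θ * bq θ x)
        = fun θ => g θ * bq θ x + f θ0 * bq θ x := by
      funext θ; rw [hg_def]; ring
    rw [this, integral_add hfi hqi, integral_const_mul]
    rfl
  have e1 : ∫ θ, f θ ∂(bPost π x) = N / Z π x + f θ0 := by
    rw [integral_bPost π x hZ f, hsplit π, ← hN_def]
    field_simp
  have e1' : ∫ θ, f θ ∂(bPost π' x) = N' / Z π' x + f θ0 := by
    rw [integral_bPost π' x hZ' f, hsplit π', ← hN'_def]
    field_simp
  rw [e1, e1']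
  have hdiff : N / Z π x + f θ0 - (N' / Z π' x + f θ0) = N / Z π x - N' / Z π' x := by ring
  rw [hdiff]
  -- bounds
  have hN'b : |N'| ≤ 1 := by
    apply abs_integral_le_of_bound
    intro t
    calc |g t * bq t x| = |g t| * |bq t x| := abs_mul _ _
      _ ≤ 1 * 1 := mul_le_mul (hgb t) (bq_abs_le_one t x) (abs_nonneg _) zero_le_one
      _ = 1 := by ring
  have hNd : |N - N'| ≤ 2 * W := by
    apply abs_integral_sub_le _ _ (by norm_num)
    intro t t'
    calc |g t * bq t x - g t' * bq t' x|
        = |g t * (bq t x - bq t' x) + bq t' x * (g t - g t')| := by congr 1; ring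
      _ ≤ |g t * (bq t x - bq t' x)| + |bq t' x * (g t - g t')| := abs_add_le _ _
      _ = |g t| * |bq t x - bq t' x| + |bq t' x| * |g t - g t'| := by rw [abs_mul, abs_mul]
      _ ≤ 1 * dist t t' + 1 * dist t t' := by
          have e1 : |g t| * |bq t x - bq t' x| ≤ 1 * dist t t' :=
            mul_le_mul (hgb t) (bq_lip x t t') (abs_nonneg _) zero_le_one
          have e2 : |bq t' x| * |g t - g t'| ≤ 1 * dist t t' :=
            mul_le_mul (bq_abs_le_one t' x) (hgL t t') (abs_nonneg _) zero_le_one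
          linarith
      _ = 2 * dist t t' := by ring
  have hZd : |Z π x - Z π' x| ≤ 1 * W := by
    apply abs_integral_sub_le _ _ (by norm_num)
    intro t t'
    rw [one_mul]
    exact bq_lip x t t'
  rw [one_mul] at hZd
  -- combine
  have key : N / Z π x - N' / Z π' x
      = ((N - N') * Z π' x + N' * (Z π' x - Z π x)) / (Z π x * Z π' x) := by
    field_simp
    ring
  rw [key]
  have hZZ : 0 < Z π x * Z π' x := mul_pos hZ hZ'
  have hnum : |(N - N') * Z π' x + N' * (Z π' x - Z π x)| ≤ 3 * W := by
    calc |(N - N') * Z π' x + N' * (Z π' x - Z π x)|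
        ≤ |(N - N') * Z π' x| + |N' * (Z π' x - Z π x)| := abs_add_le _ _
      _ = |N - N'| * |Z π' x| + |N'| * |Z π' x - Z π x| := by rw [abs_mul, abs_mul]
      _ ≤ (2 * W) * 1 + 1 * W := by
          have e1 : |N - N'| * |Z π' x| ≤ (2 * W) * 1 := by
            apply mul_le_mul hNd _ (abs_nonneg _) (by linarith)
            rw [abs_of_pos hZ']; exact hZ1'
          have e2 : |N'| * |Z π' x - Z π x| ≤ 1 * W := by
            apply mul_le_mul hN'b _ (abs_nonneg _) zero_le_one
            rw [abs_sub_comm]; exact hZd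
          linarith
      _ = 3 * W := by ring
  have hcc : c * c ≤ Z π x * Z π' x :=
    mul_le_mul hZc hZc' (le_of_lt hc) (le_of_lt hZ)
  calc |((N - N') * Z π' x + N' * (Z π' x - Z π x)) / (Z π x * Z π' x)|
      = |(N - N') * Z π' x + N' * (Z π' x - Z π x)| / (Z π x * Z π' x) := by
        rw [abs_div, abs_of_pos hZZ]
    _ ≤ (3 * W) / (Z π x * Z π' x) := by gcongr
    _ ≤ (3 * W) / (c * c) := by
        apply div_le_div_of_nonneg_left (by positivity) (by positivity) hcc
    _ = (3 / c ^ 2) * W := by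
        rw [pow_two]
        ring

end BernAux

open BernAux

/-- for the Bernoulli model and any `a, b > 0`, the posterior map
`(x,π) ↦ Post(x,π)` is Lipschitz from `({0,1} × AGD(a,b), d_X + W1)` to `(P([0,1]), W1)`,
for any metric `d_X` on the two-point sample space. -/
theorem bernoulli_posterior_lipschitz_on_AGD
    [MetricSpace Bool]
    (a b : ℝ) (ha : 0 < a) (hb : 0 < b) :
    ∃ K : ℝ, 0 ≤ K ∧ ∀ (x x' : Bool) (π π' : ProbabilityMeasure ↥BernΘ),
      π ∈ AGD a b → π' ∈ AGD a b →
      W1 (bPost π x) (bPost π' x') ≤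
        K * (dist x x' + W1 (π : Measure ↥BernΘ) (π' : Measure ↥BernΘ)) := by
  have hd0 : (0:ℝ) < dist true false := dist_pos.mpr (by simp)
  set c : ℝ := a * b with hc_def
  have hc : 0 < c := mul_pos ha hb
  refine ⟨2 / dist true false + 3 / c ^ 2, by positivity, ?_⟩
  intro x x' π π' hπ hπ'
  have hW : 0 ≤ W1 (π : Measure ↥BernΘ) (π' : Measure ↥BernΘ) := W1_nonneg _ _
  have hd : 0 ≤ dist x x' := dist_nonneg
  by_cases hxx : x = x'
  · subst hxx
    have h1 := post_diff_bound ha hb x hπ hπ'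
    have hds : dist x x = 0 := dist_self x
    rw [hds]
    calc W1 (bPost π x) (bPost π' x)
        ≤ (3 / (a * b) ^ 2) * W1 (π : Measure ↥BernΘ) (π' : Measure ↥BernΘ) := h1
      _ ≤ (2 / dist true false + 3 / c ^ 2) *
          (0 + W1 (π : Measure ↥BernΘ) (π' : Measure ↥BernΘ)) := by
          rw [zero_add, ← hc_def]
          have h2 : (0:ℝ) ≤ 2 / dist true false := by positivity
          nlinarith
  · haveI hp1 : IsProbabilityMeasure (bPost π x) :=
      bPost_prob π x (lt_of_lt_of_le hc (Z_lb ha hb hπ x))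
    haveI hp2 : IsProbabilityMeasure (bPost π' x') :=
      bPost_prob π' x' (lt_of_lt_of_le hc (Z_lb ha hb hπ' x'))
    have h2 : W1 (bPost π x) (bPost π' x') ≤ 2 := W1_le_two _ _
    have hde : dist x x' = dist true false := by
      cases x <;> cases x' <;> simp_all [dist_comm]
    calc W1 (bPost π x) (bPost π' x') ≤ 2 := h2
      _ = (2 / dist true false) * dist x x' := by rw [hde]; field_simp
      _ ≤ (2 / dist true false + 3 / c ^ 2) *
          (dist x x' + W1 (π : Measure ↥BernΘ) (π' : Measure ↥BernΘ)) := by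
          have h3 : (0:ℝ) ≤ 3 / c ^ 2 := by positivity
          have h4 : (0:ℝ) ≤ 2 / dist true false := by positivity
          nlinarith
end
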